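/- The Hénon transformation a_i = -(1/2)√(u_{2i} u_{2i-1}) (i = 1,…,n-1), b_i = (1/2)(u_{2i-1} + u_{2i-2}) (i = 1,…,n), with u_0 = u_{2n} = 0, maps solutions of the KM system u̇_i = u_i(u_{i+1} - u_{i-1}) on the positive orthant of ℝ^{2n-1} to solutions of the Toda lattice equations ȧ_i = a_i(b_{i+1} - b_i), ḃ_i = 2(a_i² - a_{i-1}²) (with a_0 = a_n = 0). -/

import Mathlib

/-- The Hénon transformation `aᵢ = -(1/2)√(u_{2i}u_{2i-1})` (`i = 1,…,n-1`),
`bᵢ = (1/2)(u_{2i-1} + u_{2i-2})` (`i = 1,…,n`), with `u₀ = u_{2n} = 0`, maps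
solutions of the KM system on the positive orthant of `ℝ^{2n-1}` to solutions of
the Toda lattice `ȧᵢ = aᵢ(bᵢ₊₁ - bᵢ)`, `ḃᵢ = 2(aᵢ² - aᵢ₋₁²)` (`a₀ = aₙ = 0`). -/
theorem henon_maps_km_to_toda (n : ℕ) (hn : 0 < n) (u : ℝ → ℕ → ℝ)
    (hpos : ∀ t : ℝ, ∀ i ∈ Finset.Icc 1 (2 * n - 1), 0 < u t i)
    (hu0 : ∀ t, u t 0 = 0) (hu2n : ∀ t, u t (2 * n) = 0)
    (hode : ∀ t : ℝ, ∀ i ∈ Finset.Icc 1 (2 * n - 1),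
      HasDerivAt (fun s => u s i) (u t i * (u t (i + 1) - u t (i - 1))) t)
    (a : ℕ → ℝ → ℝ)
    (ha : ∀ i t, a i t = if 1 ≤ i ∧ i ≤ n - 1
      then -(1 / 2) * Real.sqrt (u t (2 * i) * u t (2 * i - 1)) else 0)
    (b : ℕ → ℝ → ℝ)
    (hb : ∀ i t, b i t = (1 / 2) * (u t (2 * i - 1) + u t (2 * i - 2))) :
    (∀ t : ℝ, ∀ i ∈ Finset.Icc 1 (n - 1),
        HasDerivAt (a i) (a i t * (b (i + 1) t - b i t)) t) ∧
    (∀ t : ℝ, ∀ i ∈ Finset.Icc 1 n,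
        HasDerivAt (b i) (2 * ((a i t) ^ 2 - (a (i - 1) t) ^ 2)) t) := by
  constructor
  · -- the `a` equations
    intro t i hi
    rw [Finset.mem_Icc] at hi
    obtain ⟨hi1, hi2⟩ := hi
    have hn2 : 2 ≤ n := by omega
    have h1 : 2 * i - 1 ∈ Finset.Icc 1 (2 * n - 1) := by
      rw [Finset.mem_Icc]; omega
    have h2 : 2 * i ∈ Finset.Icc 1 (2 * n - 1) := by
      rw [Finset.mem_Icc]; omega
    have d1 := hode t (2 * i - 1) h1
    have d2 := hode t (2 * i) h2
    have e1 : 2 * i - 1 + 1 = 2 * i := by omega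
    have e2 : 2 * i - 1 - 1 = 2 * i - 2 := by omega
    rw [e1, e2] at d1
    have hPd : HasDerivAt (fun s => u s (2 * i) * u s (2 * i - 1))
        (u t (2 * i) * (u t (2 * i + 1) - u t (2 * i - 1)) * u t (2 * i - 1)
          + u t (2 * i) * (u t (2 * i - 1) * (u t (2 * i) - u t (2 * i - 2)))) t := d2.mul d1
    have hPt : 0 < u t (2 * i) * u t (2 * i - 1) :=
      mul_pos (hpos t _ h2) (hpos t _ h1)
    have hsq := hPd.sqrt hPt.ne'
    have hfa : a i = fun s => -(1 / 2) * Real.sqrt (u s (2 * i) * u s (2 * i - 1)) := by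
      funext s; rw [ha]; rw [if_pos ⟨hi1, hi2⟩]
    rw [hfa]
    convert hsq.const_mul (-(1 / 2 : ℝ)) using 1
    case e'_4 => rfl
    case e'_5 => rfl
    rw [hb, hb]
    simp only [ha, if_pos (show 1 ≤ i ∧ i ≤ n - 1 from ⟨hi1, hi2⟩)]
    have e5 : 2 * (i + 1) - 1 = 2 * i + 1 := by omega
    have e6 : 2 * (i + 1) - 2 = 2 * i := by omega
    rw [e5, e6]
    have hs : Real.sqrt (u t (2 * i) * u t (2 * i - 1)) *
        Real.sqrt (u t (2 * i) * u t (2 * i - 1)) = u t (2 * i) * u t (2 * i - 1) :=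
      Real.mul_self_sqrt hPt.le
    have hsne : Real.sqrt (u t (2 * i) * u t (2 * i - 1)) ≠ 0 := by
      positivity
    have hD : u t (2 * i) * (u t (2 * i + 1) - u t (2 * i - 1)) * u t (2 * i - 1)
          + u t (2 * i) * (u t (2 * i - 1) * (u t (2 * i) - u t (2 * i - 2)))
        = (Real.sqrt (u t (2 * i) * u t (2 * i - 1)) *
            Real.sqrt (u t (2 * i) * u t (2 * i - 1))) *
          (u t (2 * i + 1) + u t (2 * i) - u t (2 * i - 1) - u t (2 * i - 2)) := by
      rw [hs]; ring
    rw [hD]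
    field_simp
    ring
  · -- the `b` equations
    intro t i hi
    rw [Finset.mem_Icc] at hi
    obtain ⟨hi1, hi2⟩ := hi
    have h1 : 2 * i - 1 ∈ Finset.Icc 1 (2 * n - 1) := by
      rw [Finset.mem_Icc]; omega
    have d1 := hode t (2 * i - 1) h1
    have e1 : 2 * i - 1 + 1 = 2 * i := by omega
    have e2 : 2 * i - 1 - 1 = 2 * i - 2 := by omega
    rw [e1, e2] at d1
    have haA : ∀ j, 1 ≤ j → j ≤ n →
        a j t ^ 2 = (1 / 4) * (u t (2 * j) * u t (2 * j - 1)) := by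
      intro j hj1 hj2
      rcases eq_or_lt_of_le hj2 with h | h
      · subst h
        rw [ha, if_neg (by omega), hu2n]
        ring
      · have hP : 0 ≤ u t (2 * j) * u t (2 * j - 1) := by
          apply le_of_lt
          exact mul_pos (hpos t _ (by rw [Finset.mem_Icc]; omega))
            (hpos t _ (by rw [Finset.mem_Icc]; omega))
        rw [ha, if_pos ⟨hj1, by omega⟩, mul_pow, Real.sq_sqrt hP]
        norm_num
    have hAi := haA i hi1 hi2
    have hfb : b i = fun s => (1 / 2) * (u s (2 * i - 1) + u s (2 * i - 2)) :=
      funext (hb i)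
    rcases eq_or_ne i 1 with h | h
    · -- i = 1
      subst h
      have d0 : HasDerivAt (fun s => u s (2 * 1 - 2)) 0 t := by
        have : (fun s => u s (2 * 1 - 2)) = fun _ => (0 : ℝ) := funext fun s => hu0 s
        rw [this]; exact hasDerivAt_const t 0
      rw [hfb]
      convert (d1.add d0).const_mul (1 / 2 : ℝ) using 1
      case e'_4 => rfl
      case e'_5 => rfl
      case e'_8 => rfl
      have hA0 : a 0 t = 0 := by rw [ha, if_neg (by omega)]
      rw [hA0]
      have h02 : u t (2 * 1 - 2) = 0 := hu0 t
      rw [h02] at *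
      rw [hAi]
      ring
    · -- i ≥ 2
      have hi2' : 2 ≤ i := by omega
      have h2 : 2 * i - 2 ∈ Finset.Icc 1 (2 * n - 1) := by
        rw [Finset.mem_Icc]; omega
      have d2 := hode t (2 * i - 2) h2
      have e3 : 2 * i - 2 + 1 = 2 * i - 1 := by omega
      have e4 : 2 * i - 2 - 1 = 2 * i - 3 := by omega
      rw [e3, e4] at d2
      rw [hfb]
      convert (d1.add d2).const_mul (1 / 2 : ℝ) using 1
      case e'_4 => rfl
      case e'_5 => rfl
      case e'_8 => rfl
      have hAi1 := haA (i - 1) (by omega) (by omega)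
      have e7 : 2 * (i - 1) = 2 * i - 2 := by omega
      have e8 : 2 * (i - 1) - 1 = 2 * i - 3 := by omega
      rw [e8, e7] at hAi1
      rw [hAi, hAi1]
      ring
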